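/- Let G be a finite group, B = Perm(G), λ : G → B the left regular representation, and Hol(G) = Norm_B(λ(G)). Define ℋ(G) = { N ≤ Hol(G) : N is regular, N ≅ G, and Norm_B(N) = Hol(G) }. Then ℋ(G) = { τ λ(G) τ^{-1} : τ ∈ Norm_B(Hol(G)) }, and this conjugation action induces a bijection between ℋ(G) and the quotient T(G) = Norm_B(Hol(G)) / Hol(G); in particular, the cardinality of ℋ(G) equals the index [Norm_B(Hol(G)) : Hol(G)]. -/

import Mathlib

/-- A subgroup of `Equiv.Perm Z` is regular if it acts transitively and
no non-identity element has a fixed point. -/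
def IsRegularSubgroup {Z : Type*} (N : Subgroup (Equiv.Perm Z)) : Prop :=
  (∀ z w : Z, ∃ σ ∈ N, σ z = w) ∧ ∀ σ ∈ N, σ ≠ 1 → ∀ z : Z, σ z ≠ z

/-- The wreath-product subgroup `W(X, Y)` (with `Y = Xᶜ`): all permutations that
either fix both `X` and `Y` setwise, or interchange them. -/
def wprod {Z : Type*} (X : Set Z) : Subgroup (Equiv.Perm Z) where
  carrier := {w | (w '' X = X ∧ w '' Xᶜ = Xᶜ) ∨ (w '' X = Xᶜ ∧ w '' Xᶜ = X)}
  one_mem' := by simp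
  mul_mem' := by
    rintro a b (⟨ha1, ha2⟩ | ⟨ha1, ha2⟩) (⟨hb1, hb2⟩ | ⟨hb1, hb2⟩) <;>
      simp only [Set.mem_setOf_eq, Equiv.Perm.coe_mul, Set.image_comp, hb1, hb2, ha1, ha2] <;>
      tauto
  inv_mem' := by
    intro a h
    have key : ∀ S T : Set Z, a '' S = T → (a⁻¹ : Equiv.Perm Z) '' T = S := by
      intro S T hST
      rw [← hST, Set.image_image]
      simp [Equiv.Perm.inv_def]
    rcases h with ⟨h1, h2⟩ | ⟨h1, h2⟩
    · exact Or.inl ⟨key _ _ h1, key _ _ h2⟩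
    · exact Or.inr ⟨key _ _ h2, key _ _ h1⟩

/-- The image of the left regular representation `λ : G → Perm G`. -/
def leftRegRange (G : Type*) [Group G] : Subgroup (Equiv.Perm G) :=
  (MulAction.toPermHom G G).range

/-- `|Υ_n|`: number of units of exponent 2 mod `n`. -/
noncomputable def upsilonCard (n : ℕ) : ℕ :=
  Nat.card {u : (ZMod n)ˣ // u ^ 2 = 1}

/-- The holomorph `Hol(G) = Norm_B(λ(G))` inside `B = Perm G`. -/
def holSubgroup (G : Type*) [Group G] : Subgroup (Equiv.Perm G) :=
  Subgroup.normalizer (leftRegRange G : Set (Equiv.Perm G))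

/-- `ℋ(G)`: regular subgroups of `Hol(G)` isomorphic to `G` whose normalizer is `Hol(G)`. -/
def multHolClass (G : Type*) [Group G] : Set (Subgroup (Equiv.Perm G)) :=
  {N | N ≤ holSubgroup G ∧ IsRegularSubgroup N ∧ Nonempty (N ≃* G) ∧
    Subgroup.normalizer (N : Set (Equiv.Perm G)) = holSubgroup G}

namespace MHAux

open Subgroup

variable {Z : Type*}

lemma mem_conj_map {τ x : Equiv.Perm Z} {H : Subgroup (Equiv.Perm Z)} :
    x ∈ Subgroup.map (MulAut.conj τ).toMonoidHom H ↔ τ⁻¹ * x * τ ∈ H := by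
  rw [Subgroup.mem_map_equiv]
  simp [MulAut.conj_symm_apply]

lemma map_conj_eq_iff (τ : Equiv.Perm Z) (H : Subgroup (Equiv.Perm Z)) :
    Subgroup.map (MulAut.conj τ).toMonoidHom H = H ↔ τ ∈ Subgroup.normalizer (H : Set (Equiv.Perm Z)) := by
  rw [Subgroup.mem_normalizer_iff]
  constructor
  · intro heq g
    constructor
    · intro hg
      rw [← heq, mem_conj_map]
      have : τ⁻¹ * (τ * g * τ⁻¹) * τ = g := by group
      rwa [this]
    · intro hg
      rw [← heq, mem_conj_map] at hg
      have : τ⁻¹ * (τ * g * τ⁻¹) * τ = g := by group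
      rwa [this] at hg
  · intro h
    ext x
    rw [mem_conj_map]
    have h2 := h (τ⁻¹ * x * τ)
    have : τ * (τ⁻¹ * x * τ) * τ⁻¹ = x := by group
    rw [this] at h2
    exact h2

lemma map_conj_mul (σ τ : Equiv.Perm Z) (H : Subgroup (Equiv.Perm Z)) :
    Subgroup.map (MulAut.conj (σ * τ)).toMonoidHom H =
      Subgroup.map (MulAut.conj σ).toMonoidHom
        (Subgroup.map (MulAut.conj τ).toMonoidHom H) := by
  ext x
  simp only [mem_conj_map, mul_inv_rev, mul_assoc]

lemma isRegular_conj {N : Subgroup (Equiv.Perm Z)} (h : IsRegularSubgroup N)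
    (τ : Equiv.Perm Z) :
    IsRegularSubgroup (Subgroup.map (MulAut.conj τ).toMonoidHom N) := by
  obtain ⟨htrans, hfree⟩ := h
  constructor
  · intro z w
    obtain ⟨σ, hσ, hσzw⟩ := htrans (τ⁻¹ z) (τ⁻¹ w)
    refine ⟨τ * σ * τ⁻¹, ⟨σ, hσ, rfl⟩, ?_⟩
    simp only [Equiv.Perm.mul_apply, hσzw]
    exact Equiv.apply_symm_apply τ w
  · rintro _ ⟨σ, hσ, rfl⟩ hne z hz
    simp only [MulEquiv.toMonoidHom_eq_coe, MonoidHom.coe_coe, MulAut.conj_apply] at hne hz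
    have hσne : σ ≠ 1 := by
      rintro rfl
      simp at hne
    have hfix : σ (τ⁻¹ z) = τ⁻¹ z := by
      simp only [Equiv.Perm.mul_apply] at hz
      have := congrArg (τ⁻¹ : Equiv.Perm Z) hz
      simpa using this
    exact hfree σ hσ hσne (τ⁻¹ z) hfix

lemma isRegular_leftRegRange (G : Type*) [Group G] :
    IsRegularSubgroup (leftRegRange G) := by
  constructor
  · intro z w
    refine ⟨MulAction.toPermHom G G (w * z⁻¹), ⟨_, rfl⟩, ?_⟩
    simp [mul_assoc]
  · rintro _ ⟨g, rfl⟩ hne z hz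
    simp only [MulAction.toPermHom_apply, MulAction.toPerm_apply, smul_eq_mul] at hz
    have hg1 : g = 1 := mul_eq_right.mp hz
    exact hne (by rw [hg1, map_one])

lemma toPermHom_injective (G : Type*) [Group G] :
    Function.Injective (MulAction.toPermHom G G) := by
  intro g g' h
  have := congrArg (fun σ : Equiv.Perm G => σ 1) h
  simpa using this

noncomputable def lamIso (G : Type*) [Group G] : G ≃* leftRegRange G :=
  MonoidHom.ofInjective (toPermHom_injective G)

lemma exists_conj (G : Type*) [Group G] {N : Subgroup (Equiv.Perm G)}
    (hreg : IsRegularSubgroup N) (e : G ≃* N) :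
    ∃ τ : Equiv.Perm G,
      Subgroup.map (MulAut.conj τ).toMonoidHom (leftRegRange G) = N := by
  obtain ⟨htrans, hfree⟩ := hreg
  have hbij : Function.Bijective (fun g : G => ((e g : Equiv.Perm G)) 1) := by
    constructor
    · intro g g' h
      have h' : ((e g : Equiv.Perm G)) 1 = ((e g' : Equiv.Perm G)) 1 := h
      have hcoe : ((e (g⁻¹ * g') : Equiv.Perm G))
          = (e g : Equiv.Perm G)⁻¹ * (e g' : Equiv.Perm G) := by
        rw [map_mul, map_inv]
        push_cast
        rfl
      have hσ1 : ((e (g⁻¹ * g') : Equiv.Perm G)) 1 = 1 := by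
        rw [hcoe, Equiv.Perm.mul_apply, ← h']
        simp
      have hσeq : ((e (g⁻¹ * g') : Equiv.Perm G)) = 1 := by
        by_contra hne
        exact hfree _ (e (g⁻¹ * g')).2 hne 1 hσ1
      have h1 : e (g⁻¹ * g') = 1 := Subtype.ext hσeq
      have h2 : g⁻¹ * g' = 1 := e.injective (h1.trans (map_one e).symm)
      exact (inv_mul_eq_one.mp h2)
    · intro w
      obtain ⟨σ, hσ, hσw⟩ := htrans 1 w
      exact ⟨e.symm ⟨σ, hσ⟩, by simp [hσw]⟩
  set τ : Equiv.Perm G := Equiv.ofBijective _ hbij with hτdef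
  have key : ∀ g : G, τ * (MulAction.toPermHom G G g) * τ⁻¹ = (e g : Equiv.Perm G) := by
    intro g
    ext w
    simp only [Equiv.Perm.mul_apply]
    have h1 : (τ⁻¹ : Equiv.Perm G) w = τ.symm w := rfl
    have h2 : ∀ x : G, τ x = ((e x : Equiv.Perm G)) 1 := fun _ => rfl
    rw [h1]
    have h3 : (MulAction.toPermHom G G g) (τ.symm w) = g * τ.symm w := rfl
    rw [h3, h2, map_mul]
    have h4 : ((e g * e (τ.symm w) : N) : Equiv.Perm G)
        = (e g : Equiv.Perm G) * (e (τ.symm w) : Equiv.Perm G) := rfl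
    rw [h4, Equiv.Perm.mul_apply, ← h2, Equiv.apply_symm_apply]
  refine ⟨τ, le_antisymm ?_ ?_⟩
  · rintro x ⟨y, ⟨g, rfl⟩, rfl⟩
    have hk := key g
    have : (MulAut.conj τ).toMonoidHom (MulAction.toPermHom G G g)
        = (e g : Equiv.Perm G) := by
      rw [← hk]; rfl
    rw [this]
    exact (e g).2
  · intro n hn
    refine ⟨(MulAction.toPermHom G G) (e.symm ⟨n, hn⟩), ⟨_, rfl⟩, ?_⟩
    have hk := key (e.symm ⟨n, hn⟩)
    have : (MulAut.conj τ).toMonoidHom (MulAction.toPermHom G G (e.symm ⟨n, hn⟩))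
        = ((e (e.symm ⟨n, hn⟩) : N) : Equiv.Perm G) := by
      rw [← hk]; rfl
    rw [this, MulEquiv.apply_symm_apply]

lemma mem_multHolClass_iff (G : Type*) [Group G] (N : Subgroup (Equiv.Perm G)) :
    N ∈ multHolClass G ↔ ∃ τ ∈ Subgroup.normalizer (holSubgroup G : Set (Equiv.Perm G)),
      N = Subgroup.map (MulAut.conj τ).toMonoidHom (leftRegRange G) := by
  constructor
  · rintro ⟨hle, hreg, ⟨e⟩, hnorm⟩
    obtain ⟨τ, hτ⟩ := exists_conj G hreg e.symm
    refine ⟨τ, ?_, hτ.symm⟩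
    rw [← map_conj_eq_iff]
    calc Subgroup.map (MulAut.conj τ).toMonoidHom (holSubgroup G)
        = Subgroup.normalizer (Subgroup.map (MulAut.conj τ).toMonoidHom (leftRegRange G) : Set (Equiv.Perm G)) :=
          Subgroup.map_equiv_normalizer_eq _ _
      _ = Subgroup.normalizer (N : Set (Equiv.Perm G)) := by rw [hτ]
      _ = holSubgroup G := hnorm
  · rintro ⟨τ, hτ, rfl⟩
    have hmapHol : Subgroup.map (MulAut.conj τ).toMonoidHom (holSubgroup G) = holSubgroup G :=
      (map_conj_eq_iff τ _).mpr hτ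
    have hnorm : Subgroup.normalizer (Subgroup.map (MulAut.conj τ).toMonoidHom (leftRegRange G) : Set (Equiv.Perm G))
        = holSubgroup G := by
      rw [← Subgroup.map_equiv_normalizer_eq]
      exact hmapHol
    refine ⟨hnorm ▸ Subgroup.le_normalizer, isRegular_conj (isRegular_leftRegRange G) τ,
      ⟨?_⟩, hnorm⟩
    exact ((MulEquiv.subgroupMap (MulAut.conj τ) (leftRegRange G)).symm.trans
      (lamIso G).symm)

end MHAux

/-- `ℋ(G) = {τ λ(G) τ⁻¹ : τ ∈ Norm_B(Hol(G))}`, and conjugation induces a bijection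
between `T(G) = Norm_B(Hol(G))/Hol(G)` and `ℋ(G)`; in particular
`|ℋ(G)| = [Norm_B(Hol(G)) : Hol(G)]`. -/
theorem multiple_holomorph_parametrization (G : Type*) [Group G] [Finite G] :
    multHolClass G =
      {N : Subgroup (Equiv.Perm G) | ∃ τ ∈ Subgroup.normalizer (holSubgroup G : Set (Equiv.Perm G)),
        N = Subgroup.map (MulAut.conj τ).toMonoidHom (leftRegRange G)} ∧
    (∃ f : (Subgroup.normalizer (holSubgroup G : Set (Equiv.Perm G)) ⧸
          ((holSubgroup G).subgroupOf (Subgroup.normalizer (holSubgroup G : Set (Equiv.Perm G))))) ≃ multHolClass G,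
      ∀ τ : Subgroup.normalizer (holSubgroup G : Set (Equiv.Perm G)),
        (f (QuotientGroup.mk τ) : Subgroup (Equiv.Perm G)) =
          Subgroup.map (MulAut.conj (τ : Equiv.Perm G)).toMonoidHom (leftRegRange G)) ∧
    Nat.card (multHolClass G) =
      (holSubgroup G).relIndex (Subgroup.normalizer (holSubgroup G : Set (Equiv.Perm G))) := by
  classical
  have hset : multHolClass G =
      {N : Subgroup (Equiv.Perm G) | ∃ τ ∈ Subgroup.normalizer (holSubgroup G : Set (Equiv.Perm G)),
        N = Subgroup.map (MulAut.conj τ).toMonoidHom (leftRegRange G)} :=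
    Set.ext (MHAux.mem_multHolClass_iff G)
  -- the map from the normalizer to the class
  have hF : ∀ τ : Subgroup.normalizer (holSubgroup G : Set (Equiv.Perm G)),
      Subgroup.map (MulAut.conj (τ : Equiv.Perm G)).toMonoidHom (leftRegRange G)
        ∈ multHolClass G :=
    fun τ => (MHAux.mem_multHolClass_iff G _).mpr ⟨τ, τ.2, rfl⟩
  let F : Subgroup.normalizer (holSubgroup G : Set (Equiv.Perm G)) → multHolClass G := fun τ =>
    ⟨Subgroup.map (MulAut.conj (τ : Equiv.Perm G)).toMonoidHom (leftRegRange G), hF τ⟩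
  -- key: F τ = F τ' iff same coset of Hol
  have hchar : ∀ a b : Subgroup.normalizer (holSubgroup G : Set (Equiv.Perm G)),
      (Subgroup.map (MulAut.conj (a : Equiv.Perm G)).toMonoidHom (leftRegRange G) =
        Subgroup.map (MulAut.conj (b : Equiv.Perm G)).toMonoidHom (leftRegRange G)) ↔
      a⁻¹ * b ∈ (holSubgroup G).subgroupOf (Subgroup.normalizer (holSubgroup G : Set (Equiv.Perm G))) := by
    intro a b
    rw [Subgroup.mem_subgroupOf]
    have hco : ((a⁻¹ * b : Subgroup.normalizer (holSubgroup G : Set (Equiv.Perm G))) : Equiv.Perm G)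
        = (a : Equiv.Perm G)⁻¹ * (b : Equiv.Perm G) := rfl
    rw [hco]
    show _ ↔ (a : Equiv.Perm G)⁻¹ * (b : Equiv.Perm G) ∈ Subgroup.normalizer (leftRegRange G : Set (Equiv.Perm G))
    rw [← MHAux.map_conj_eq_iff]
    constructor
    · intro h
      rw [MHAux.map_conj_mul, ← h, ← MHAux.map_conj_mul, inv_mul_cancel]
      rw [MHAux.map_conj_eq_iff]
      exact one_mem _
    · intro h
      have : Subgroup.map (MulAut.conj ((a : Equiv.Perm G) *
          ((a : Equiv.Perm G)⁻¹ * (b : Equiv.Perm G)))).toMonoidHom (leftRegRange G) =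
          Subgroup.map (MulAut.conj (a : Equiv.Perm G)).toMonoidHom (leftRegRange G) := by
        rw [MHAux.map_conj_mul, h]
      rw [← this, mul_inv_cancel_left]
  have hwd : ∀ a b : Subgroup.normalizer (holSubgroup G : Set (Equiv.Perm G)),
      (QuotientGroup.leftRel ((holSubgroup G).subgroupOf (Subgroup.normalizer (holSubgroup G : Set (Equiv.Perm G))))).r a b →
        F a = F b := by
    intro a b hab
    rw [QuotientGroup.leftRel_apply] at hab
    exact Subtype.ext ((hchar a b).mpr hab)
  let f0 : (Subgroup.normalizer (holSubgroup G : Set (Equiv.Perm G)) ⧸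
      ((holSubgroup G).subgroupOf (Subgroup.normalizer (holSubgroup G : Set (Equiv.Perm G))))) → multHolClass G :=
    Quotient.lift F hwd
  have hbij : Function.Bijective f0 := by
    constructor
    · intro x y
      induction x using Quotient.inductionOn with
      | h a =>
        induction y using Quotient.inductionOn with
        | h b =>
          intro h
          have : F a = F b := h
          apply Quotient.sound
          exact QuotientGroup.leftRel_apply.mpr ((hchar a b).mp (congrArg Subtype.val this))
    · rintro ⟨N, hN⟩
      obtain ⟨τ, hτ, hNeq⟩ := (MHAux.mem_multHolClass_iff G N).mp hN
      exact ⟨Quotient.mk _ ⟨τ, hτ⟩, Subtype.ext hNeq.symm⟩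
  refine ⟨hset, ⟨Equiv.ofBijective f0 hbij, fun τ => rfl⟩, ?_⟩
  have : Nat.card (multHolClass G) = Nat.card (Subgroup.normalizer (holSubgroup G : Set (Equiv.Perm G)) ⧸
      ((holSubgroup G).subgroupOf (Subgroup.normalizer (holSubgroup G : Set (Equiv.Perm G))))) :=
    (Nat.card_congr (Equiv.ofBijective f0 hbij)).symm
  rw [this]
  rfl
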